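/- Final step of Theorem 1 (collapse of the blocks): Let k ≥ 1, let V_{a,b} (a, b ∈ {0,1}) be k×k complex matrices such that V := Σ_{a,b∈{0,1}} |φ_{a,b}⟩⟨ā, b| ⊗ V_{a,b} is unitary on ℂ⁴ ⊗ ℂ^k, and let ξ be a positive-definite density matrix on ℂ^k. Let |e⟩ = sin(π/8)|0⟩ + cos(π/8)|1⟩ (the +1 eigenvector of (X−Z)/√2), |+⟩ = (|0⟩+|1⟩)/√2, and set σ = V ( |e⟩⟨e| ⊗ |+⟩⟨+| ⊗ ξ ) V†. If Tr[(I₂ ⊗ X ⊗ I_k) σ] = 1 and Tr[(Z ⊗ I₂ ⊗ I_k) σ] = −1, then V_{0,0} = V_{0,1} = V_{1,0} = V_{1,1}. -/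

import Mathlib

/-!
Final step of Theorem 1 (collapse of the blocks): if
`V = Σ_{a,b} |φ_{a,b}⟩⟨ā, b| ⊗ V_{a,b}` is unitary, `ξ` is a full-rank state on `ℂ^k`,
`σ = V (|e⟩⟨e| ⊗ |+⟩⟨+| ⊗ ξ) V†`, and `Tr[(I ⊗ X ⊗ I) σ] = 1`,
`Tr[(Z ⊗ I ⊗ I) σ] = −1`, then all four blocks `V_{a,b}` coincide.
-/

open Matrix Finset
open scoped Matrix Kronecker ComplexOrder

noncomputable section

def PauliX : Matrix (Fin 2) (Fin 2) ℂ := !![0, 1; 1, 0]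

def PauliZ : Matrix (Fin 2) (Fin 2) ℂ := !![1, 0; 0, -1]

/-- The Bell state `|φ_{a,b}⟩ = (|a b⟩ + (−1)^a |1−a, 1−b⟩)/√2`. -/
def bellVec (a b : Fin 2) : Fin 2 × Fin 2 → ℂ := fun p =>
  (Real.sqrt 2 : ℂ)⁻¹ *
    ((if p = (a, b) then 1 else 0) +
      (-1 : ℂ) ^ (a : ℕ) * (if p = (a + 1, b + 1) then 1 else 0))

/-- Computational basis vector `|a⟩` of `ℂ²`. -/
def ketF (a : Fin 2) : Fin 2 → ℂ := fun i => if i = a then 1 else 0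

/-- `|0̄⟩, |1̄⟩`: the eigenvectors of `(X+Z)/√2`. -/
def barKet : Fin 2 → Fin 2 → ℂ :=
  ![![(Real.cos (Real.pi / 8) : ℂ), (Real.sin (Real.pi / 8) : ℂ)],
    ![-(Real.sin (Real.pi / 8) : ℂ), (Real.cos (Real.pi / 8) : ℂ)]]

/-- Kronecker product of two vectors in `ℂ²`. -/
def vkron (u v : Fin 2 → ℂ) : Fin 2 × Fin 2 → ℂ := fun p => u p.1 * v p.2

/-- `|e⟩ = sin(π/8)|0⟩ + cos(π/8)|1⟩`, the `+1` eigenvector of `(X−Z)/√2`. -/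
def eKet : Fin 2 → ℂ := ![(Real.sin (Real.pi / 8) : ℂ), (Real.cos (Real.pi / 8) : ℂ)]

/-- `|+⟩ = (|0⟩+|1⟩)/√2`. -/
def plusKet : Fin 2 → ℂ := fun _ => (Real.sqrt 2 : ℂ)⁻¹

open scoped MatrixOrder

-- helper lemmas
lemma vmv_mul {m n q : Type*} [Fintype n] (u : m → ℂ) (v w : n → ℂ) (x : q → ℂ) :
    vecMulVec u v * vecMulVec w x = (v ⬝ᵥ w) • vecMulVec u x := by
  ext i j
  simp only [Matrix.mul_apply, vecMulVec_apply, Matrix.smul_apply, smul_eq_mul, dotProduct]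
  rw [Finset.sum_mul]
  exact Finset.sum_congr rfl fun k _ => by ring

lemma mul_vmv {m n q : Type*} [Fintype n] (A : Matrix m n ℂ) (u : n → ℂ) (v : q → ℂ) :
    A * vecMulVec u v = vecMulVec (A *ᵥ u) v := by
  ext i j
  simp only [Matrix.mul_apply, vecMulVec_apply, mulVec, dotProduct]
  rw [Finset.sum_mul]
  exact Finset.sum_congr rfl fun k _ => by ring

lemma kron_conjT {l m p q : Type*} (A : Matrix l m ℂ) (B : Matrix p q ℂ) :
    (A ⊗ₖ B)ᴴ = Aᴴ ⊗ₖ Bᴴ := by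
  ext ⟨i, j⟩ ⟨a, b⟩
  simp [conjTranspose_apply, kroneckerMap_apply, mul_comm]

lemma trace_cc_zero {m n : Type*} [Fintype m] [Fintype n] (C : Matrix m n ℂ)
    (h : (Cᴴ * C).trace = 0) : C = 0 := by
  have h' : ∑ j : n, ∑ i : m, (Complex.normSq (C i j) : ℂ) = 0 := by
    simpa [Matrix.trace, Matrix.diag, Matrix.mul_apply, conjTranspose_apply,
      Complex.normSq_eq_conj_mul_self, Complex.star_def] using h
  have h'' : ∑ j : n, ∑ i : m, Complex.normSq (C i j) = 0 := by
    exact_mod_cast h'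
  ext i j
  have h1 := (Finset.sum_eq_zero_iff_of_nonneg (fun j _ => Finset.sum_nonneg
    (fun i _ => Complex.normSq_nonneg _))).mp h'' j (Finset.mem_univ j)
  have h2 := (Finset.sum_eq_zero_iff_of_nonneg
    (fun i _ => Complex.normSq_nonneg _)).mp h1 i (Finset.mem_univ i)
  simpa using Complex.normSq_eq_zero.mp h2

lemma psd_mul_psd_trace_zero {n : Type*} [Fintype n] [DecidableEq n]
    {A B : Matrix n n ℂ} (hA : A.PosSemidef) (hB : B.PosSemidef)
    (h : (A * B).trace = 0) : A * B = 0 := by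
  set sA := CFC.sqrt A with hsA
  set sB := CFC.sqrt B with hsB
  have hAe : sA * sA = A := CFC.sqrt_mul_sqrt_self A hA.nonneg
  have hBe : sB * sB = B := CFC.sqrt_mul_sqrt_self B hB.nonneg
  have hAH : sAᴴ = sA := (CFC.sqrt_nonneg A).posSemidef.isHermitian
  have hBH : sBᴴ = sB := (CFC.sqrt_nonneg B).posSemidef.isHermitian
  have key : (sB * sA)ᴴ * (sB * sA) = sA * B * sA := by
    rw [conjTranspose_mul, hAH, hBH, ← hBe]; noncomm_ring
  have htr : ((sB * sA)ᴴ * (sB * sA)).trace = 0 := by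
    rw [key]
    calc (sA * B * sA).trace = (sA * sA * B).trace := by
          rw [Matrix.trace_mul_cycle]
      _ = 0 := by rw [hAe, h]
  have hzero : sB * sA = 0 := trace_cc_zero _ htr
  have hzero' : sA * sB = 0 := by
    have := congrArg conjTranspose hzero
    simpa [conjTranspose_mul, hAH, hBH] using this
  calc A * B = sA * (sA * sB) * sB := by rw [← hAe, ← hBe]; noncomm_ring
    _ = 0 := by rw [hzero']; simp

lemma psd_smul {n : Type*} [Fintype n] {A : Matrix n n ℂ} (hA : A.PosSemidef)
    {c : ℝ} (hc : 0 ≤ c) : ((c : ℂ) • A).PosSemidef := by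
  rw [Matrix.posSemidef_iff_dotProduct_mulVec]
  constructor
  · unfold Matrix.IsHermitian
    rw [conjTranspose_smul, hA.isHermitian.eq]
    congr 1
    simp [Complex.star_def, Complex.conj_ofReal]
  · intro x
    have h0 : (0:ℂ) ≤ (c:ℂ) := Complex.zero_le_real.mpr hc
    have := hA.dotProduct_mulVec_nonneg x
    calc (0:ℂ) = (c:ℂ) * 0 := by ring
      _ ≤ (c:ℂ) * (star x ⬝ᵥ A *ᵥ x) := by
          exact mul_le_mul_of_nonneg_left this h0
      _ = star x ⬝ᵥ ((c:ℂ) • A) *ᵥ x := by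
          rw [smul_mulVec, dotProduct_smul]; simp

lemma psd_one_sub {n : Type*} [Fintype n] [DecidableEq n] {G : Matrix n n ℂ}
    (hH : Gᴴ = G) (hG2 : G * G = 1) : ((1 : Matrix n n ℂ) - G).PosSemidef := by
  have key : (1 - G)ᴴ * (1 - G) = (2:ℂ) • (1 - G) := by
    rw [conjTranspose_sub, hH, conjTranspose_one]
    rw [sub_mul, mul_sub, mul_sub, hG2]
    simp only [mul_one, one_mul]
    rw [two_smul]
    abel
  have : (1 : Matrix n n ℂ) - G = ((2⁻¹:ℝ):ℂ) • ((1 - G)ᴴ * (1 - G)) := by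
    rw [key]
    push_cast
    rw [smul_smul]
    norm_num
  rw [this]
  exact psd_smul (posSemidef_conjTranspose_mul_self _) (by norm_num)

lemma psd_one_add {n : Type*} [Fintype n] [DecidableEq n] {G : Matrix n n ℂ}
    (hH : Gᴴ = G) (hG2 : G * G = 1) : ((1 : Matrix n n ℂ) + G).PosSemidef := by
  have := psd_one_sub (G := -G) (by rw [conjTranspose_neg, hH]) (by rw [neg_mul_neg, hG2])
  simpa [sub_neg_eq_add] using this

lemma sqrt2_sq : ((Real.sqrt 2 : ℝ) : ℂ) * ((Real.sqrt 2 : ℝ) : ℂ) = 2 := by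
  rw [← Complex.ofReal_mul, Real.mul_self_sqrt (by norm_num)]
  norm_num

lemma sqrt2_ne : ((Real.sqrt 2 : ℝ) : ℂ) ≠ 0 := by
  intro h
  have := sqrt2_sq
  rw [h] at this
  norm_num at this

lemma bar_dot_psi (a b : Fin 2) :
    star (vkron (barKet a) (ketF b)) ⬝ᵥ vkron eKet plusKet = 2⁻¹ := by
  have h2R : 2 * Real.sin (Real.pi / 8) * Real.cos (Real.pi / 8) = Real.sqrt 2 / 2 := by
    rw [← Real.sin_two_mul (Real.pi / 8), show 2 * (Real.pi / 8) = Real.pi / 4 by ring]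
    exact Real.sin_pi_div_four
  have h3R : Real.cos (Real.pi / 8) ^ 2 - Real.sin (Real.pi / 8) ^ 2 = Real.sqrt 2 / 2 := by
    have hc2 := Real.cos_two_mul (Real.pi / 8)
    have hp := Real.sin_sq_add_cos_sq (Real.pi / 8)
    rw [show 2 * (Real.pi / 8) = Real.pi / 4 by ring, Real.cos_pi_div_four] at hc2
    nlinarith
  set S := Real.sin (Real.pi / 8) with hSdef
  set C := Real.cos (Real.pi / 8) with hCdef
  set T := Real.sqrt 2 with hTdef
  have h2 : 2 * (S:ℂ) * (C:ℂ) = (T:ℂ) / 2 := by exact_mod_cast congrArg Complex.ofReal h2R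
  have h3 : (C:ℂ) ^ 2 - (S:ℂ) ^ 2 = (T:ℂ) / 2 := by exact_mod_cast congrArg Complex.ofReal h3R
  have hT2 : (T:ℂ) * (T:ℂ) = 2 := sqrt2_sq
  have hTne : (T:ℂ) ≠ 0 := sqrt2_ne
  have hTinv : ((T:ℝ):ℂ)⁻¹ = (T:ℂ) / 2 := by
    refine inv_eq_of_mul_eq_one_right ?_
    linear_combination hT2 / 2
  fin_cases a <;> fin_cases b <;>
  · simp +zetaDelta only [dotProduct, Fintype.sum_prod_type, Fin.sum_univ_two, vkron, barKet, ketF,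
      eKet, plusKet, Pi.star_apply, Fin.mk_zero, Fin.mk_one, Fin.isValue,
      Matrix.cons_val_zero, Matrix.cons_val_one, Matrix.head_cons, star_mul',
      Complex.star_def, map_inv₀, map_neg, Complex.conj_ofReal, reduceIte, _root_.map_one, _root_.map_zero,
      Fin.zero_eta, Fin.mk_one, one_ne_zero, zero_ne_one, if_true, if_false,
      mul_one, mul_zero, one_mul, zero_mul, add_zero, zero_add, neg_mul, neg_neg, hTinv]
    first
    | linear_combination ((T:ℂ)/2) * h2 + (1/4 : ℂ) * hT2
    | linear_combination ((T:ℂ)/2) * h3 + (1/4 : ℂ) * hT2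
    | linear_combination (-(T:ℂ)/2) * h2 + (1/4 : ℂ) * hT2
    | linear_combination (-(T:ℂ)/2) * h3 + (1/4 : ℂ) * hT2

lemma X2_mulVec (a b : Fin 2) :
    ((1 : Matrix (Fin 2) (Fin 2) ℂ) ⊗ₖ PauliX) *ᵥ bellVec a b = bellVec a (b + 1) := by
  funext p
  fin_cases a <;> fin_cases b <;> fin_cases p <;>
    simp [Matrix.mulVec, dotProduct, Fintype.sum_prod_type, Fin.sum_univ_two,
      kroneckerMap_apply, bellVec, PauliX, Matrix.one_apply, Prod.ext_iff] <;>
    norm_num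

lemma Z1_mulVec (a b : Fin 2) :
    (PauliZ ⊗ₖ (1 : Matrix (Fin 2) (Fin 2) ℂ)) *ᵥ bellVec a b = -bellVec (a + 1) (b + 1) := by
  funext p
  fin_cases a <;> fin_cases b <;> fin_cases p <;>
    simp [Matrix.mulVec, dotProduct, Fintype.sum_prod_type, Fin.sum_univ_two,
      kroneckerMap_apply, bellVec, PauliZ, Matrix.one_apply, Prod.ext_iff] <;>
    norm_num

lemma psi_norm : (vecMulVec (vkron eKet plusKet) (star (vkron eKet plusKet))).trace = 1 := by
  have hpy : ((Real.sin (Real.pi/8) : ℝ):ℂ)^2 + ((Real.cos (Real.pi/8) : ℝ):ℂ)^2 = 1 := by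
    exact_mod_cast congrArg Complex.ofReal (Real.sin_sq_add_cos_sq (Real.pi/8))
  have hT2 : ((Real.sqrt 2 : ℝ) : ℂ) * ((Real.sqrt 2 : ℝ) : ℂ) = 2 := sqrt2_sq
  simp only [Matrix.trace, Matrix.diag, vecMulVec_apply, Fintype.sum_prod_type,
    Fin.sum_univ_two, vkron, eKet, plusKet, Pi.star_apply, star_mul',
    Complex.star_def, map_inv₀, Complex.conj_ofReal, Matrix.cons_val_zero,
    Matrix.cons_val_one, Matrix.head_cons]
  have hTinv : ((Real.sqrt 2 : ℝ):ℂ)⁻¹ = ((Real.sqrt 2 : ℝ):ℂ) / 2 := by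
    refine inv_eq_of_mul_eq_one_right ?_
    linear_combination hT2 / 2
  rw [hTinv]
  linear_combination (((Real.sqrt 2 : ℝ):ℂ)^2/2) * hpy + (1/2 : ℂ) * hT2

lemma psi_ne : (star (vkron eKet plusKet)) ((0 : Fin 2), (0 : Fin 2)) ≠ 0 := by
  have hs : Real.sin (Real.pi/8) ≠ 0 := by
    have := Real.sin_pos_of_pos_of_lt_pi (x := Real.pi/8) (by positivity)
      (by linarith [Real.pi_pos])
    linarith
  simp only [Pi.star_apply, vkron, eKet, plusKet, Matrix.cons_val_zero, star_mul',
    Complex.star_def, map_inv₀, Complex.conj_ofReal]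
  exact mul_ne_zero (by exact_mod_cast hs) (inv_ne_zero sqrt2_ne)

lemma extract {k : ℕ} (N : Fin 2 → Fin 2 → Matrix (Fin k) (Fin k) ℂ)
    (h : ∑ a : Fin 2, ∑ b : Fin 2,
        (vecMulVec (bellVec a b) (star (vkron eKet plusKet))) ⊗ₖ N a b = 0) :
    ∀ a b, N a b = 0 := by
  have hT2 : ((Real.sqrt 2 : ℝ) : ℂ) * ((Real.sqrt 2 : ℝ) : ℂ) = 2 := sqrt2_sq
  have hTinv : ((Real.sqrt 2 : ℝ):ℂ)⁻¹ = ((Real.sqrt 2 : ℝ):ℂ) / 2 := by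
    refine inv_eq_of_mul_eq_one_right ?_
    linear_combination hT2 / 2
  have key : ∀ (p : Fin 2 × Fin 2) (i j : Fin k),
      ∑ a : Fin 2, ∑ b : Fin 2, bellVec a b p * N a b i j = 0 := by
    intro p i j
    have h0 := congrFun (congrFun h (p, i)) (((0, 0) : Fin 2 × Fin 2), j)
    simp only [Matrix.sum_apply, kroneckerMap_apply, vecMulVec_apply,
      Matrix.zero_apply] at h0
    have h1 : ∑ a : Fin 2, ∑ b : Fin 2,
        bellVec a b p * (star (vkron eKet plusKet)) (0, 0) * N a b i j
        = (∑ a : Fin 2, ∑ b : Fin 2, bellVec a b p * N a b i j)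
            * (star (vkron eKet plusKet)) (0, 0) := by
      rw [Finset.sum_mul]
      refine Finset.sum_congr rfl fun a _ => ?_
      rw [Finset.sum_mul]
      exact Finset.sum_congr rfl fun b _ => by ring
    rw [h1] at h0
    exact (mul_eq_zero.mp h0).resolve_right psi_ne
  intro a b
  ext i j
  have E1 := key (0, 0) i j
  have E2 := key (0, 1) i j
  have E3 := key (1, 0) i j
  have E4 := key (1, 1) i j
  simp only [Fin.sum_univ_two, bellVec, show ((0:Fin 2)+1) = 1 from rfl,
    show ((1:Fin 2)+1) = 0 from rfl, Prod.mk.injEq, Fin.isValue] at E1 E2 E3 E4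
  norm_num at E1 E2 E3 E4
  rw [hTinv] at E1 E2 E3 E4
  fin_cases a <;> fin_cases b <;> simp only [Matrix.zero_apply, Fin.isValue, Fin.zero_eta, Fin.mk_one]
  · linear_combination (((Real.sqrt 2 : ℝ):ℂ)/2) * E1 + (((Real.sqrt 2 : ℝ):ℂ)/2) * E4
      + (-(N 0 0 i j)/2) * hT2
  · linear_combination (((Real.sqrt 2 : ℝ):ℂ)/2) * E2 + (((Real.sqrt 2 : ℝ):ℂ)/2) * E3
      + (-(N 0 1 i j)/2) * hT2
  · linear_combination (-((Real.sqrt 2 : ℝ):ℂ)/2) * E2 + (((Real.sqrt 2 : ℝ):ℂ)/2) * E3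
      + (-(N 1 0 i j)/2) * hT2
  · linear_combination (-((Real.sqrt 2 : ℝ):ℂ)/2) * E1 + (((Real.sqrt 2 : ℝ):ℂ)/2) * E4
      + (-(N 1 1 i j)/2) * hT2

lemma kron_sub {l m : Type*} {k : ℕ} (A : Matrix l m ℂ)
    (B C : Matrix (Fin k) (Fin k) ℂ) : A ⊗ₖ (B - C) = A ⊗ₖ B - A ⊗ₖ C := by
  ext ⟨i, x⟩ ⟨j, y⟩
  simp [kroneckerMap_apply, mul_sub]

lemma neg_kron {l m : Type*} {k : ℕ} (A : Matrix l m ℂ)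
    (B : Matrix (Fin k) (Fin k) ℂ) : (-A) ⊗ₖ B = -(A ⊗ₖ B) := by
  ext ⟨i, x⟩ ⟨j, y⟩
  simp [kroneckerMap_apply]

lemma vmv_neg {m n : Type*} (u : m → ℂ) (v : n → ℂ) :
    vecMulVec (-u) v = -vecMulVec u v := by
  ext i j
  simp [vecMulVec_apply]

lemma fin2_shift {M : Type*} [AddCommMonoid M] (f : Fin 2 → M) :
    ∑ b : Fin 2, f (b + 1) = ∑ b : Fin 2, f b := by
  rw [Fin.sum_univ_two, Fin.sum_univ_two, show ((0:Fin 2)+1) = 1 from rfl,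
    show ((1:Fin 2)+1) = 0 from rfl, add_comm]

theorem collapse_of_blocks (k : ℕ) (hk : 1 ≤ k)
    (Vm : Fin 2 → Fin 2 → Matrix (Fin k) (Fin k) ℂ)
    (V : Matrix ((Fin 2 × Fin 2) × Fin k) ((Fin 2 × Fin 2) × Fin k) ℂ)
    (hVdef : V = ∑ a : Fin 2, ∑ b : Fin 2,
        (vecMulVec (bellVec a b) (star (vkron (barKet a) (ketF b)))) ⊗ₖ Vm a b)
    (hVunitary : V ∈ Matrix.unitaryGroup ((Fin 2 × Fin 2) × Fin k) ℂ)
    (ξ : Matrix (Fin k) (Fin k) ℂ) (hξ : ξ.PosDef) (hξtr : ξ.trace = 1)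
    (σ : Matrix ((Fin 2 × Fin 2) × Fin k) ((Fin 2 × Fin 2) × Fin k) ℂ)
    (hσdef : σ = V * ((vecMulVec (vkron eKet plusKet) (star (vkron eKet plusKet))) ⊗ₖ ξ) * Vᴴ)
    (hX : ((((1 : Matrix (Fin 2) (Fin 2) ℂ) ⊗ₖ PauliX) ⊗ₖ (1 : Matrix (Fin k) (Fin k) ℂ))
        * σ).trace = 1)
    (hZ : (((PauliZ ⊗ₖ (1 : Matrix (Fin 2) (Fin 2) ℂ)) ⊗ₖ (1 : Matrix (Fin k) (Fin k) ℂ))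
        * σ).trace = -1) :
    Vm 0 0 = Vm 0 1 ∧ Vm 0 0 = Vm 1 0 ∧ Vm 0 0 = Vm 1 1 := by
  set ψ : Fin 2 × Fin 2 → ℂ := vkron eKet plusKet with hψdef
  set P : Matrix (Fin 2 × Fin 2) (Fin 2 × Fin 2) ℂ := vecMulVec ψ (star ψ) with hPdef
  set ρ : Matrix ((Fin 2 × Fin 2) × Fin k) ((Fin 2 × Fin 2) × Fin k) ℂ := P ⊗ₖ ξ with hρdef
  -- unitarity
  have hV1 : Vᴴ * V = 1 := by
    simpa [Matrix.star_eq_conjTranspose] using Matrix.mem_unitaryGroup_iff'.mp hVunitary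
  -- ρ is PSD
  have hρpsd : ρ.PosSemidef := by
    have hs := hξ.posSemidef
    have hss : CFC.sqrt ξ * CFC.sqrt ξ = ξ := CFC.sqrt_mul_sqrt_self ξ hs.nonneg
    have hsH : (CFC.sqrt ξ)ᴴ = CFC.sqrt ξ := (CFC.sqrt_nonneg ξ).posSemidef.isHermitian
    have hD : ρ = ((Matrix.replicateRow Unit (star ψ)) ⊗ₖ CFC.sqrt ξ)ᴴ *
        ((Matrix.replicateRow Unit (star ψ)) ⊗ₖ CFC.sqrt ξ) := by
      rw [kron_conjT, ← Matrix.mul_kronecker_mul, hρdef, Matrix.conjTranspose_replicateRow,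
        star_star, hsH, hss, hPdef, vecMulVec_eq Unit]
    rw [hD]
    exact Matrix.posSemidef_conjTranspose_mul_self _
  have hσpsd : σ.PosSemidef := by
    rw [hσdef]
    exact hρpsd.mul_mul_conjTranspose_same V
  -- traces
  have htrρ : ρ.trace = 1 := by
    rw [hρdef, Matrix.trace_kronecker, hξtr, hPdef, hψdef, psi_norm, one_mul]
  have htrσ : σ.trace = 1 := by
    rw [hσdef, Matrix.trace_mul_comm, ← Matrix.mul_assoc, hV1, Matrix.one_mul, htrρ]
  -- the two observables
  set G1 : Matrix ((Fin 2 × Fin 2) × Fin k) ((Fin 2 × Fin 2) × Fin k) ℂ :=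
    ((1 : Matrix (Fin 2) (Fin 2) ℂ) ⊗ₖ PauliX) ⊗ₖ (1 : Matrix (Fin k) (Fin k) ℂ) with hG1def
  set G2 : Matrix ((Fin 2 × Fin 2) × Fin k) ((Fin 2 × Fin 2) × Fin k) ℂ :=
    (PauliZ ⊗ₖ (1 : Matrix (Fin 2) (Fin 2) ℂ)) ⊗ₖ (1 : Matrix (Fin k) (Fin k) ℂ) with hG2def
  have hXH : PauliXᴴ = PauliX := by
    ext i j
    fin_cases i <;> fin_cases j <;> simp [PauliX, conjTranspose_apply]
  have hZH : PauliZᴴ = PauliZ := by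
    ext i j
    fin_cases i <;> fin_cases j <;> simp [PauliZ, conjTranspose_apply]
  have hXX : PauliX * PauliX = 1 := by
    ext i j
    fin_cases i <;> fin_cases j <;>
      simp [PauliX, Matrix.mul_apply, Fin.sum_univ_two, Matrix.one_apply]
  have hZZ : PauliZ * PauliZ = 1 := by
    ext i j
    fin_cases i <;> fin_cases j <;>
      simp [PauliZ, Matrix.mul_apply, Fin.sum_univ_two, Matrix.one_apply]
  have hG1H : G1ᴴ = G1 := by
    rw [hG1def, kron_conjT, kron_conjT, hXH, Matrix.conjTranspose_one,
      Matrix.conjTranspose_one]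
  have hG2H : G2ᴴ = G2 := by
    rw [hG2def, kron_conjT, kron_conjT, hZH, Matrix.conjTranspose_one,
      Matrix.conjTranspose_one]
  have hG1sq : G1 * G1 = 1 := by
    rw [hG1def, ← Matrix.mul_kronecker_mul, ← Matrix.mul_kronecker_mul, hXX,
      Matrix.one_mul, Matrix.mul_one, Matrix.one_kronecker_one, Matrix.one_kronecker_one]
  have hG2sq : G2 * G2 = 1 := by
    rw [hG2def, ← Matrix.mul_kronecker_mul, ← Matrix.mul_kronecker_mul, hZZ,
      Matrix.one_mul, Matrix.mul_one, Matrix.one_kronecker_one, Matrix.one_kronecker_one]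
  -- saturation forces eigenvector equations
  have hG1σ : G1 * σ = σ := by
    have hpsd := psd_one_sub hG1H hG1sq
    have htr : ((1 - G1) * σ).trace = 0 := by
      rw [Matrix.sub_mul, Matrix.one_mul, Matrix.trace_sub, htrσ, hG1def, hX, sub_self]
    have h0 := psd_mul_psd_trace_zero hpsd hσpsd htr
    rw [Matrix.sub_mul, Matrix.one_mul, sub_eq_zero] at h0
    exact h0.symm
  have hG2σ : G2 * σ = -σ := by
    have hpsd := psd_one_add hG2H hG2sq
    have htr : ((1 + G2) * σ).trace = 0 := by
      rw [Matrix.add_mul, Matrix.one_mul, Matrix.trace_add, htrσ, hG2def, hZ, add_neg_cancel]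
    have h0 := psd_mul_psd_trace_zero hpsd hσpsd htr
    rw [Matrix.add_mul, Matrix.one_mul, add_eq_zero_iff_eq_neg] at h0
    have h2 := congrArg Neg.neg h0
    simpa using h2.symm
  have hσV : σ * V = V * ρ := by
    rw [hσdef, Matrix.mul_assoc, hV1, Matrix.mul_one]
  have hG1Vρ : G1 * (V * ρ) = V * ρ := by
    have h1 : G1 * (σ * V) = σ * V := by rw [← Matrix.mul_assoc, hG1σ]
    rwa [hσV] at h1
  have hG2Vρ : G2 * (V * ρ) = -(V * ρ) := by
    have h1 : G2 * (σ * V) = -σ * V := by rw [← Matrix.mul_assoc, hG2σ]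
    rwa [hσV, Matrix.neg_mul, hσV] at h1
  -- expansion of V * ρ
  have hVρ : V * ρ = ∑ a : Fin 2, ∑ b : Fin 2,
      (vecMulVec (bellVec a b) (star ψ)) ⊗ₖ ((2⁻¹ : ℂ) • (Vm a b * ξ)) := by
    rw [hVdef, Finset.sum_mul]
    refine Finset.sum_congr rfl fun a _ => ?_
    rw [Finset.sum_mul]
    refine Finset.sum_congr rfl fun b _ => ?_
    rw [hρdef, ← Matrix.mul_kronecker_mul, hPdef, vmv_mul, hψdef, bar_dot_psi,
      Matrix.smul_kronecker, Matrix.kronecker_smul]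
  have hG1exp : G1 * (V * ρ) = ∑ a : Fin 2, ∑ b : Fin 2,
      (vecMulVec (bellVec a b) (star ψ)) ⊗ₖ ((2⁻¹ : ℂ) • (Vm a (b + 1) * ξ)) := by
    rw [hVρ, Finset.mul_sum]
    refine Finset.sum_congr rfl fun a _ => ?_
    rw [Finset.mul_sum]
    have hterm : ∀ b : Fin 2,
        G1 * ((vecMulVec (bellVec a b) (star ψ)) ⊗ₖ ((2⁻¹ : ℂ) • (Vm a b * ξ)))
        = (vecMulVec (bellVec a (b + 1)) (star ψ)) ⊗ₖ ((2⁻¹ : ℂ) • (Vm a b * ξ)) := by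
      intro b
      rw [hG1def, ← Matrix.mul_kronecker_mul, Matrix.one_mul, mul_vmv, X2_mulVec]
    rw [Fin.sum_univ_two, Fin.sum_univ_two, hterm 0, hterm 1,
      show ((0:Fin 2)+1) = 1 from rfl, show ((1:Fin 2)+1) = 0 from rfl, add_comm]
  have hG2exp : G2 * (V * ρ) = -∑ a : Fin 2, ∑ b : Fin 2,
      (vecMulVec (bellVec a b) (star ψ)) ⊗ₖ ((2⁻¹ : ℂ) • (Vm (a+1) (b + 1) * ξ)) := by
    rw [hVρ, Finset.mul_sum]
    have hterm : ∀ a b : Fin 2,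
        G2 * ((vecMulVec (bellVec a b) (star ψ)) ⊗ₖ ((2⁻¹ : ℂ) • (Vm a b * ξ)))
        = -((vecMulVec (bellVec (a+1) (b + 1)) (star ψ)) ⊗ₖ ((2⁻¹ : ℂ) • (Vm a b * ξ))) := by
      intro a b
      rw [hG2def, ← Matrix.mul_kronecker_mul, Matrix.one_mul, mul_vmv, Z1_mulVec,
        vmv_neg, neg_kron]
    rw [Fin.sum_univ_two, Finset.mul_sum, Finset.mul_sum, Fin.sum_univ_two, Fin.sum_univ_two,
      hterm 0 0, hterm 0 1, hterm 1 0, hterm 1 1]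
    rw [Fin.sum_univ_two, Fin.sum_univ_two, Fin.sum_univ_two]
    norm_num
    abel
  -- X relation: Vm a (b+1) = Vm a b
  have hXrel : ∀ a b : Fin 2, Vm a (b + 1) * ξ = Vm a b * ξ := by
    have hz : ∑ a : Fin 2, ∑ b : Fin 2, (vecMulVec (bellVec a b) (star (vkron eKet plusKet))) ⊗ₖ
        ((2⁻¹ : ℂ) • (Vm a (b+1) * ξ) - (2⁻¹ : ℂ) • (Vm a b * ξ)) = 0 := by
      have := sub_eq_zero.mpr (hG1exp.symm.trans hG1Vρ)
      rw [hVρ] at this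
      rw [← this, ← Finset.sum_sub_distrib]
      refine Finset.sum_congr rfl fun a _ => ?_
      rw [← Finset.sum_sub_distrib]
      refine Finset.sum_congr rfl fun b _ => ?_
      rw [kron_sub, hψdef]
    have hN := extract _ hz
    intro a b
    have h1 := hN a b
    rw [sub_eq_zero] at h1
    have h2 := congrArg (fun M => (2:ℂ) • M) h1
    simpa [smul_smul] using h2
  -- Z relation: Vm (a+1) (b+1) = Vm a b
  have hZrel : ∀ a b : Fin 2, Vm (a+1) (b + 1) * ξ = Vm a b * ξ := by
    have he : ∑ a : Fin 2, ∑ b : Fin 2, (vecMulVec (bellVec a b) (star ψ)) ⊗ₖ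
        ((2⁻¹ : ℂ) • (Vm (a+1) (b+1) * ξ)) = ∑ a : Fin 2, ∑ b : Fin 2,
        (vecMulVec (bellVec a b) (star ψ)) ⊗ₖ ((2⁻¹ : ℂ) • (Vm a b * ξ)) := by
      have h1 : -∑ a : Fin 2, ∑ b : Fin 2, (vecMulVec (bellVec a b) (star ψ)) ⊗ₖ
          ((2⁻¹ : ℂ) • (Vm (a+1) (b + 1) * ξ)) = -(V * ρ) := hG2exp.symm.trans hG2Vρ
      rw [neg_inj] at h1
      rw [h1, hVρ]
    have hz : ∑ a : Fin 2, ∑ b : Fin 2, (vecMulVec (bellVec a b) (star (vkron eKet plusKet))) ⊗ₖ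
        ((2⁻¹ : ℂ) • (Vm (a+1) (b+1) * ξ) - (2⁻¹ : ℂ) • (Vm a b * ξ)) = 0 := by
      rw [← sub_eq_zero.mpr he, ← Finset.sum_sub_distrib]
      refine Finset.sum_congr rfl fun a _ => ?_
      rw [← Finset.sum_sub_distrib]
      refine Finset.sum_congr rfl fun b _ => ?_
      rw [kron_sub, hψdef]
    have hN := extract _ hz
    intro a b
    have h1 := hN a b
    rw [sub_eq_zero] at h1
    have h2 := congrArg (fun M => (2:ℂ) • M) h1
    simpa [smul_smul] using h2
  -- cancel ξ
  have hξinv : ξ * ξ⁻¹ = 1 :=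
    Matrix.mul_nonsing_inv _ (Matrix.isUnit_iff_isUnit_det ξ |>.mp hξ.isUnit)
  have cancel : ∀ A B : Matrix (Fin k) (Fin k) ℂ, A * ξ = B * ξ → A = B := by
    intro A B hAB
    calc A = A * (ξ * ξ⁻¹) := by rw [hξinv, Matrix.mul_one]
      _ = B * (ξ * ξ⁻¹) := by rw [← Matrix.mul_assoc, hAB, Matrix.mul_assoc]
      _ = B := by rw [hξinv, Matrix.mul_one]
  have hX00 : Vm 0 1 = Vm 0 0 := cancel _ _ (hXrel 0 0)
  have hZ00 : Vm 1 1 = Vm 0 0 := cancel _ _ (hZrel 0 0)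
  have hX10 : Vm 1 1 = Vm 1 0 := cancel _ _ (hXrel 1 0)
  exact ⟨hX00.symm, by rw [← hX10, hZ00], hZ00.symm⟩


end
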